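/- arXiv:1905.09697 — 2 statements merged into one kernel-verified Lean document; each statement's English description precedes it below -/
import Mathlib

section
/- For any finitely generated S-module Y, regarded as an R-module via the surjection R → S, the first syzygy of Y over R satisfies Ω_R Y ≅ n^{⊕b} ⊕ Ω_S Y, where b = β_0^S(Y) is the minimal number of generators of Y over S, Ω_S Y is the first syzygy of Y in a minimal S-free resolution (regarded as an R-module via R → S), and n is regarded as an R-module via R → T. -/
open CategoryTheory Limits IsLocalRing

set_option synthInstance.maxHeartbeats 1000000
set_option maxHeartbeats 1000000

noncomputable section

/-- The fiber product `S ×ₖ T` as a subring of `S × T`. -/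
def fiberSubring {S T k : Type} [CommRing S] [CommRing T] [CommRing k]
    (πS : S →+* k) (πT : T →+* k) : Subring (S × T) where
  carrier := {x | πS x.1 = πT x.2}
  mul_mem' {a b} ha hb := by
    simp only [Set.mem_setOf_eq, Prod.fst_mul, Prod.snd_mul, map_mul] at *
    rw [ha, hb]
  one_mem' := by simp
  add_mem' {a b} ha hb := by
    simp only [Set.mem_setOf_eq, Prod.fst_add, Prod.snd_add, map_add] at *
    rw [ha, hb]
  zero_mem' := by simp
  neg_mem' {a} ha := by
    simp only [Set.mem_setOf_eq, Prod.fst_neg, Prod.snd_neg, map_neg] at *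
    rw [ha]

/-- The projection `R → S` from the fiber product. -/
def etaS {S T k : Type} [CommRing S] [CommRing T] [CommRing k]
    (πS : S →+* k) (πT : T →+* k) : ↥(fiberSubring πS πT) →+* S :=
  (RingHom.fst S T).comp (fiberSubring πS πT).subtype

/-- The projection `R → T` from the fiber product. -/
def etaT {S T k : Type} [CommRing S] [CommRing T] [CommRing k]
    (πS : S →+* k) (πT : T →+* k) : ↥(fiberSubring πS πT) →+* T :=
  (RingHom.snd S T).comp (fiberSubring πS πT).subtype

/-- Minimal number of generators of a module (`β₀`). -/
noncomputable def minGen (A : Type) [CommRing A] (M : Type) [AddCommGroup M] [Module A M] : ℕ :=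
  sInf {n | ∃ f : (Fin n → A) →ₗ[A] M, Function.Surjective f}

/-- A chosen minimal free cover of `M`. -/
noncomputable def minCover (A : Type) [CommRing A] (M : Type) [AddCommGroup M] [Module A M] :
    (Fin (minGen A M) → A) →ₗ[A] M :=
  by classical exact
    if h : ∃ f : (Fin (minGen A M) → A) →ₗ[A] M, Function.Surjective f then h.choose else 0

/-- The first syzygy of `M`, w.r.t. the chosen minimal free cover. -/
noncomputable def Syz (A : Type) [CommRing A] (M : Type) [AddCommGroup M] [Module A M] :
    Submodule A (Fin (minGen A M) → A) :=
  LinearMap.ker (minCover A M)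

/-- The first Betti number `β₁`. -/
noncomputable def beta1 (A : Type) [CommRing A] (M : Type) [AddCommGroup M] [Module A M] : ℕ :=
  minGen A ↥(Syz A M)

/-- `ProjDimLE A n M` means the projective dimension of `M` over `A` is at most `n`. -/
def ProjDimLE (A : Type) [CommRing A] : ℕ → ∀ (M : Type) [AddCommGroup M] [Module A M], Prop
  | 0, M, _, _ => Module.Projective A M
  | n + 1, M, _, _ =>
      ∃ (c : ℕ) (f : (Fin c → A) →ₗ[A] M), Function.Surjective f ∧
        ProjDimLE A n ↥(LinearMap.ker f)

/-- The depth of a module over a local ring, via vanishing of `Ext(k, M)`. -/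
noncomputable def moduleDepth (A : Type) [CommRing A] [IsLocalRing A]
    (M : Type) [AddCommGroup M] [Module A M] : ℕ∞ :=
  sInf {n : ℕ∞ | ∃ i : ℕ, n = i ∧ ¬ Limits.IsZero
    (((Ext A (ModuleCat A) i).obj (Opposite.op (ModuleCat.of A (ResidueField A)))).obj
      (ModuleCat.of A M))}

/-- `Tor` over the fiber product ring. -/
noncomputable abbrev TorFP {S T k : Type} [CommRing S] [CommRing T] [CommRing k]
    (πS : S →+* k) (πT : T →+* k) (n : ℕ)
    (M N : ModuleCat ↥(fiberSubring πS πT)) : ModuleCat ↥(fiberSubring πS πT) :=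
  ((Tor (ModuleCat ↥(fiberSubring πS πT)) n).obj M).obj N

/-- An `S`-module viewed as a module over the fiber product. -/
noncomputable abbrev ofS {S T k : Type} [CommRing S] [CommRing T] [CommRing k]
    (πS : S →+* k) (πT : T →+* k) (Y : Type) [AddCommGroup Y] [Module S Y] :
    ModuleCat ↥(fiberSubring πS πT) :=
  (ModuleCat.restrictScalars (etaS πS πT)).obj (ModuleCat.of S Y)

/-- A `T`-module viewed as a module over the fiber product. -/
noncomputable abbrev ofT {S T k : Type} [CommRing S] [CommRing T] [CommRing k]
    (πS : S →+* k) (πT : T →+* k) (Z : Type) [AddCommGroup Z] [Module T Z] :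
    ModuleCat ↥(fiberSubring πS πT) :=
  (ModuleCat.restrictScalars (etaT πS πT)).obj (ModuleCat.of T Z)


section MyAux
open Function Submodule

section Aux
variable {A : Type} [CommRing A] {M : Type} [AddCommGroup M] [Module A M]

lemma eq_fintypeLC {n : ℕ} (f : (Fin n → A) →ₗ[A] M) :
    f = Fintype.linearCombination A (fun j => f (Pi.single j 1)) := by
  apply LinearMap.ext
  intro a
  rw [Fintype.linearCombination_apply]
  have : a = ∑ j, Pi.single j (a j) := (Finset.univ_sum_single a).symm
  conv_lhs => rw [this]
  rw [map_sum]
  refine Finset.sum_congr rfl fun j _ => ?_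
  rw [← f.map_smul]
  congr 1
  ext i
  by_cases h : i = j
  · subst h; simp
  · simp [Pi.single_apply, h]

lemma surj_iff_span_top {n : ℕ} (v : Fin n → M) :
    Function.Surjective (Fintype.linearCombination A v) ↔ span A (Set.range v) = ⊤ := by
  rw [← LinearMap.range_eq_top, Fintype.range_linearCombination]

lemma minGen_exists_cover [Module.Finite A M] :
    ∃ f : (Fin (minGen A M) → A) →ₗ[A] M, Function.Surjective f := by
  have hne : {n | ∃ f : (Fin n → A) →ₗ[A] M, Function.Surjective f}.Nonempty := by
    obtain ⟨n, s, hs⟩ := Module.Finite.exists_fin (R := A) (M := M)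
    exact ⟨n, Fintype.linearCombination A s, (surj_iff_span_top s).2 hs⟩
  exact Nat.sInf_mem hne

lemma mem_ker_nonunit {n : ℕ} (hn : minGen A M = n) (f : (Fin n → A) →ₗ[A] M)
    (hf : Function.Surjective f) {x : Fin n → A} (hx : f x = 0) (i : Fin n) :
    ¬ IsUnit (x i) := by
  intro hu
  obtain ⟨m, rfl⟩ : ∃ m, n = m + 1 := ⟨n - 1, (Nat.succ_pred_eq_of_pos i.pos).symm⟩
  set v : Fin (m + 1) → M := fun j => f (Pi.single j 1) with hv
  have hfv : f = Fintype.linearCombination A v := eq_fintypeLC f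
  have hspan : span A (Set.range v) = ⊤ := by
    rw [← surj_iff_span_top]; rwa [← hfv]
  set w : Fin m → M := v ∘ i.succAbove with hw
  have hvw : ∀ j, v j ∈ span A (Set.range w) := by
    have hne : ∀ j, j ≠ i → v j ∈ span A (Set.range w) := by
      intro j hj
      obtain ⟨l, rfl⟩ := Fin.exists_succAbove_eq hj
      exact subset_span ⟨l, by simp [hw]⟩
    intro j
    by_cases hj : j = i
    · subst hj
      have hsum : ∑ l, x l • v l = 0 := by
        have h2 := hx; rw [hfv] at h2; exact h2
      have hsplit : x j • v j + ∑ l ∈ Finset.univ.erase j, x l • v l = 0 := by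
        rwa [← Finset.add_sum_erase _ (fun l => x l • v l) (Finset.mem_univ j)] at hsum
      have hxv : x j • v j = -∑ l ∈ Finset.univ.erase j, x l • v l :=
        eq_neg_of_add_eq_zero_left hsplit
      have : v j = (↑hu.unit⁻¹ : A) • (x j • v j) := by
        rw [smul_smul, IsUnit.val_inv_mul, one_smul]
      rw [this, hxv]
      exact Submodule.smul_mem _ _ (neg_mem (Submodule.sum_mem _ fun l hl =>
        Submodule.smul_mem _ _ (hne l (Finset.ne_of_mem_erase hl))))
    · exact hne j hj
  have hspanw : span A (Set.range w) = ⊤ := by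
    rw [eq_top_iff, ← hspan, span_le]
    rintro _ ⟨j, rfl⟩
    exact hvw j
  have hm : m ∈ {n | ∃ f : (Fin n → A) →ₗ[A] M, Function.Surjective f} :=
    ⟨Fintype.linearCombination A w, (surj_iff_span_top w).2 hspanw⟩
  have : minGen A M ≤ m := Nat.sInf_le hm
  omega

end Aux

section Transfer
variable {A S : Type} [CommRing A] [CommRing S] [Algebra A S]
variable {M : Type} [AddCommGroup M] [Module S M] [Module A M] [IsScalarTower A S M]

lemma span_eq_top_of_span_eq_top (hs : Function.Surjective (algebraMap A S))
    {s : Set M} (h : span S s = ⊤) : span A s = ⊤ := by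
  rw [eq_top_iff]
  rintro y -
  have hy : y ∈ span S s := by rw [h]; trivial
  induction hy using Submodule.span_induction with
  | mem z hz => exact subset_span hz
  | zero => exact zero_mem _
  | add a b _ _ ha hb => exact add_mem ha hb
  | smul c a _ ha =>
      obtain ⟨r, rfl⟩ := hs c
      rw [algebraMap_smul]
      exact Submodule.smul_mem _ r ha

lemma span_eq_top_of_span_eq_top' {s : Set M} (h : span A s = ⊤) : span S s = ⊤ := by
  rw [eq_top_iff]
  rintro y -
  have hy : y ∈ span A s := by rw [h]; trivial
  induction hy using Submodule.span_induction with
  | mem z hz => exact subset_span hz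
  | zero => exact zero_mem _
  | add a b _ _ ha hb => exact add_mem ha hb
  | smul c a _ ha => rw [← algebraMap_smul S c a]; exact Submodule.smul_mem _ _ ha

lemma finite_of_tower (hs : Function.Surjective (algebraMap A S)) [Module.Finite S M] :
    Module.Finite A M := by
  obtain ⟨n, v, hv⟩ := Module.Finite.exists_fin (R := S) (M := M)
  exact Module.Finite.of_surjective (Fintype.linearCombination A v)
    ((surj_iff_span_top v).2 (span_eq_top_of_span_eq_top (A := A) (S := S) hs hv))

lemma minGen_eq_of_surjective (hs : Function.Surjective (algebraMap A S)) :
    minGen A M = minGen S M := by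
  have hset : {n | ∃ f : (Fin n → A) →ₗ[A] M, Function.Surjective f} =
      {n | ∃ f : (Fin n → S) →ₗ[S] M, Function.Surjective f} := by
    ext n
    constructor
    · rintro ⟨f, hf⟩
      refine ⟨Fintype.linearCombination S (fun j => f (Pi.single j 1)), ?_⟩
      rw [surj_iff_span_top]
      apply span_eq_top_of_span_eq_top' (A := A) (S := S)
      rw [← surj_iff_span_top]
      rwa [← eq_fintypeLC f]
    · rintro ⟨g, hg⟩
      refine ⟨Fintype.linearCombination A (fun j => g (Pi.single j 1)), ?_⟩
      rw [surj_iff_span_top]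
      apply span_eq_top_of_span_eq_top hs
      rw [← surj_iff_span_top]
      rwa [← eq_fintypeLC g]
  unfold minGen
  rw [hset]

end Transfer

section Unique
open IsLocalRing
variable {A : Type} [CommRing A] [IsLocalRing A] {M : Type} [AddCommGroup M] [Module A M]

omit [IsLocalRing A] in
lemma pi_mem_smul_top {n : ℕ} {I : Ideal A} {x : Fin n → A} (hx : ∀ i, x i ∈ I) :
    x ∈ I • (⊤ : Submodule A (Fin n → A)) := by
  have : x = ∑ i, x i • (Pi.single i 1 : Fin n → A) := by
    have h1 : (fun i => x i • (Pi.single i 1 : Fin n → A)) =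
        fun i => (Pi.single i (x i) : Fin n → A) := by
      funext i; rw [← Pi.single_smul, smul_eq_mul, mul_one]
    rw [h1, Finset.univ_sum_single]
  rw [this]
  exact Submodule.sum_mem _ fun i _ =>
    Submodule.smul_mem_smul (hx i) Submodule.mem_top

lemma ker_equiv_of_minimal {n : ℕ} (f g : (Fin n → A) →ₗ[A] M)
    (hf : Function.Surjective f) (hg : Function.Surjective g)
    (hker : ∀ x ∈ LinearMap.ker g, ∀ i, x i ∈ maximalIdeal A) :
    Nonempty (↥(LinearMap.ker f) ≃ₗ[A] ↥(LinearMap.ker g)) := by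
  classical
  choose a ha using fun j => hg (f (Pi.single j 1))
  set φ : (Fin n → A) →ₗ[A] (Fin n → A) := Fintype.linearCombination A a with hφ
  have hgφ : g.comp φ = f := by
    conv_rhs => rw [eq_fintypeLC f]
    apply LinearMap.ext
    intro x
    show g (∑ i, x i • a i) = _
    rw [map_sum]
    simp_rw [map_smul, ha]
    rfl
  have hgφ' : ∀ x, g (φ x) = f x := fun x => congrArg (fun F => F x) hgφ |>.trans rfl
  have hsurj : Function.Surjective φ := by
    rw [← LinearMap.range_eq_top]
    have hle : (⊤ : Submodule A (Fin n → A)) ≤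
        LinearMap.range φ ⊔ maximalIdeal A • (⊤ : Submodule A (Fin n → A)) := by
      intro x _
      obtain ⟨y, hy⟩ := hf (g x)
      have hk : x - φ y ∈ LinearMap.ker g := by
        rw [LinearMap.mem_ker, map_sub, hgφ' y, hy, sub_self]
      have : x = φ y + (x - φ y) := by ring
      rw [this]
      exact Submodule.add_mem _ (Submodule.mem_sup_left ⟨y, rfl⟩)
        (Submodule.mem_sup_right (pi_mem_smul_top (hker _ hk)))
    have := Submodule.le_of_le_smul_of_le_jacobson_bot
      (Module.Finite.fg_top (R := A) (M := Fin n → A))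
      (by rw [jacobson_eq_maximalIdeal (⊥ : Ideal A) bot_ne_top]) hle
    exact top_le_iff.mp this
  have hinj : Function.Injective φ :=
    OrzechProperty.injective_of_surjective_endomorphism φ hsurj
  let e : (Fin n → A) ≃ₗ[A] (Fin n → A) := LinearEquiv.ofBijective φ ⟨hinj, hsurj⟩
  have hmap : (LinearMap.ker f).map (e : (Fin n → A) →ₗ[A] (Fin n → A)) = LinearMap.ker g := by
    have hcomap : LinearMap.ker f = (LinearMap.ker g).comap φ := by
      ext x; simp [LinearMap.mem_ker, hgφ' x]
    rw [hcomap]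
    exact Submodule.map_comap_eq_of_surjective hsurj _
  exact ⟨e.ofSubmodules _ _ hmap⟩

end Unique


end MyAux

section MyAux2
open Function Submodule IsLocalRing

lemma minCover_surjective (A : Type) [CommRing A] (M : Type) [AddCommGroup M] [Module A M]
    [Module.Finite A M] : Function.Surjective (minCover A M) := by
  have h : ∃ f : (Fin (minGen A M) → A) →ₗ[A] M, Function.Surjective f := minGen_exists_cover
  unfold minCover
  rw [dif_pos h]
  exact h.choose_spec

variable {S T k : Type} [CommRing S] [CommRing T] [Field k]
    [IsLocalRing S] [IsLocalRing T]
    (πS : S →+* k) (πT : T →+* k)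

lemma isUnit_fiber_iff (hkS : RingHom.ker πS = maximalIdeal S)
    (hkT : RingHom.ker πT = maximalIdeal T) (x : ↥(fiberSubring πS πT)) :
    IsUnit x ↔ πS x.1.1 ≠ 0 := by
  constructor
  · intro hx h0
    have h1 : IsUnit x.1.1 := hx.map (etaS πS πT)
    have h2 : x.1.1 ∈ maximalIdeal S := by
      rw [← hkS, RingHom.mem_ker]; exact h0
    exact (mem_nonunits_iff.mp ((mem_maximalIdeal _).mp h2)) h1
  · intro h0
    have hu : IsUnit x.1.1 := by
      by_contra h
      exact h0 (by rw [← RingHom.mem_ker, hkS]; exact (mem_maximalIdeal _).mpr (mem_nonunits_iff.mpr h))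
    have h0T : πT x.1.2 ≠ 0 := by rw [← x.2]; exact h0
    have hw : IsUnit x.1.2 := by
      by_contra h
      exact h0T (by rw [← RingHom.mem_ker, hkT]; exact (mem_maximalIdeal _).mpr (mem_nonunits_iff.mpr h))
    obtain ⟨u, hu⟩ := hu
    obtain ⟨w, hw⟩ := hw
    refine IsUnit.of_mul_eq_one (a := x) ⟨((↑u⁻¹ : S), (↑w⁻¹ : T)), ?_⟩ ?_
    · show πS ↑u⁻¹ = πT ↑w⁻¹
      have h1 : πS ↑u * πS ↑u⁻¹ = 1 := by rw [← map_mul, Units.mul_inv, map_one]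
      have h2 : πT ↑w * πT ↑w⁻¹ = 1 := by rw [← map_mul, Units.mul_inv, map_one]
      have h3 : πS ↑u = πT ↑w := by rw [hu, hw]; exact x.2
      rw [h3] at h1
      exact (inv_eq_of_mul_eq_one_right h1) ▸ (inv_eq_of_mul_eq_one_right h2) ▸ rfl
    · apply Subtype.ext
      show (x.1.1 * ↑u⁻¹, x.1.2 * ↑w⁻¹) = (1, 1)
      rw [← hu, ← hw, Units.mul_inv, Units.mul_inv]

lemma isLocalRing_fiber (hkS : RingHom.ker πS = maximalIdeal S)
    (hkT : RingHom.ker πT = maximalIdeal T) : IsLocalRing ↥(fiberSubring πS πT) := by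
  haveI : Nontrivial ↥(fiberSubring πS πT) := by
    refine nontrivial_of_ne 0 1 fun h => ?_
    exact zero_ne_one (congrArg (fun z => z.1.1) h)
  apply IsLocalRing.of_nonunits_add
  intro a b ha hb
  rw [mem_nonunits_iff] at *
  rw [isUnit_fiber_iff πS πT hkS hkT] at *
  push_neg at ha hb ⊢
  show πS (a.1.1 + b.1.1) = 0
  rw [map_add, ha, hb, add_zero]

lemma mem_maximalIdeal_fiber (hkS : RingHom.ker πS = maximalIdeal S)
    (hkT : RingHom.ker πT = maximalIdeal T) (x : ↥(fiberSubring πS πT)) :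
    haveI := isLocalRing_fiber πS πT hkS hkT
    x ∈ maximalIdeal ↥(fiberSubring πS πT) ↔ πS x.1.1 = 0 := by
  haveI := isLocalRing_fiber πS πT hkS hkT
  rw [mem_maximalIdeal, mem_nonunits_iff, isUnit_fiber_iff πS πT hkS hkT, not_not]

end MyAux2

theorem stmt2 {S T k : Type} [CommRing S] [CommRing T] [Field k]
    [IsLocalRing S] [IsLocalRing T] [IsNoetherianRing S] [IsNoetherianRing T]
    (πS : S →+* k) (πT : T →+* k)
    (hπS : Function.Surjective πS) (hπT : Function.Surjective πT)
    (hkS : RingHom.ker πS = maximalIdeal S) (hkT : RingHom.ker πT = maximalIdeal T)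
    (hSk : maximalIdeal S ≠ ⊥) (hTk : maximalIdeal T ≠ ⊥)
    [Algebra ↥(fiberSubring πS πT) S] (hAS : algebraMap ↥(fiberSubring πS πT) S = etaS πS πT)
    [Algebra ↥(fiberSubring πS πT) T] (hAT : algebraMap ↥(fiberSubring πS πT) T = etaT πS πT)
    (Y : Type) [AddCommGroup Y] [Module S Y] [Module.Finite S Y] [Module ↥(fiberSubring πS πT) Y] [IsScalarTower ↥(fiberSubring πS πT) S Y] :
    Nonempty ((↥(Syz ↥(fiberSubring πS πT) Y)) ≃ₗ[↥(fiberSubring πS πT)]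
      ((Fin (minGen S Y) → ↥(maximalIdeal T)) × ↥(Syz S Y))) := by
  classical
  haveI hLR : IsLocalRing ↥(fiberSubring πS πT) := isLocalRing_fiber πS πT hkS hkT
  have hRS : Function.Surjective (algebraMap ↥(fiberSubring πS πT) S) := by
    rw [hAS]
    intro s
    obtain ⟨t, ht⟩ := hπT (πS s)
    exact ⟨⟨(s, t), ht.symm⟩, rfl⟩
  haveI : Module.Finite ↥(fiberSubring πS πT) Y := finite_of_tower (M := Y) hRS
  have hb : minGen ↥(fiberSubring πS πT) Y = minGen S Y :=
    minGen_eq_of_surjective (M := Y) hRS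
  set b := minGen S Y with hbdef
  set c := minGen ↥(fiberSubring πS πT) Y with hcdef
  -- kernel coordinates of the minimal S-cover lie in the maximal ideal
  have hfkermem : ∀ x ∈ LinearMap.ker (minCover S Y), ∀ i, πS (x i) = 0 := by
    intro x hx i
    have h1 : ¬ IsUnit (x i) :=
      mem_ker_nonunit hbdef.symm (minCover S Y) (minCover_surjective S Y)
        (LinearMap.mem_ker.mp hx) i
    rw [← RingHom.mem_ker, hkS]
    exact (IsLocalRing.mem_maximalIdeal _).mpr (mem_nonunits_iff.mpr h1)
  -- the comparison cover g0 on (Fin b → R)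
  set ρ : (Fin b → ↥(fiberSubring πS πT)) →ₗ[↥(fiberSubring πS πT)] (Fin b → S) :=
    (Algebra.linearMap ↥(fiberSubring πS πT) S).compLeft (Fin b) with hρdef
  have hρ : ∀ (x : Fin b → ↥(fiberSubring πS πT)) (i : Fin b), ρ x i = (x i).1.1 := by
    intro x i
    show algebraMap ↥(fiberSubring πS πT) S (x i) = _
    rw [hAS]
    rfl
  have hρs : Function.Surjective ρ := by
    intro y
    refine ⟨fun i => (hRS (y i)).choose, funext fun i => ?_⟩
    exact (hRS (y i)).choose_spec
  set g0 : (Fin b → ↥(fiberSubring πS πT)) →ₗ[↥(fiberSubring πS πT)] Y :=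
    ((minCover S Y).restrictScalars ↥(fiberSubring πS πT)).comp ρ with hg0def
  have hg0x : ∀ x : Fin b → ↥(fiberSubring πS πT),
      g0 x = minCover S Y (fun i => (x i).1.1) := by
    intro x
    show minCover S Y (ρ x) = _
    congr 1
    funext i
    exact hρ x i
  have hg0 : Function.Surjective g0 := (minCover_surjective S Y).comp hρs
  -- reindex to (Fin c → R)
  set ε : (Fin c → ↥(fiberSubring πS πT)) ≃ₗ[↥(fiberSubring πS πT)]
      (Fin b → ↥(fiberSubring πS πT)) :=
    LinearEquiv.funCongrLeft ↥(fiberSubring πS πT) ↥(fiberSubring πS πT) (finCongr hb.symm)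
    with hεdef
  set g : (Fin c → ↥(fiberSubring πS πT)) →ₗ[↥(fiberSubring πS πT)] Y :=
    g0.comp (ε : (Fin c → ↥(fiberSubring πS πT)) →ₗ[↥(fiberSubring πS πT)]
      (Fin b → ↥(fiberSubring πS πT))) with hgdef
  have hg : Function.Surjective g := hg0.comp ε.surjective
  have hcoord : ∀ x ∈ LinearMap.ker g, ∀ i, x i ∈ maximalIdeal ↥(fiberSubring πS πT) := by
    intro x hx i
    have h1 : ¬ IsUnit (x i) :=
      mem_ker_nonunit hcdef.symm g hg (LinearMap.mem_ker.mp hx) i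
    exact (IsLocalRing.mem_maximalIdeal _).mpr (mem_nonunits_iff.mpr h1)
  -- first equivalence : Syz R Y ≃ ker g
  obtain ⟨e1⟩ := ker_equiv_of_minimal (minCover ↥(fiberSubring πS πT) Y) g
    (minCover_surjective ↥(fiberSubring πS πT) Y) hg hcoord
  -- second equivalence : ker g ≃ ker g0
  have hmap : (LinearMap.ker g).map
      (ε : (Fin c → ↥(fiberSubring πS πT)) →ₗ[↥(fiberSubring πS πT)]
        (Fin b → ↥(fiberSubring πS πT))) = LinearMap.ker g0 := by
    rw [hgdef, LinearMap.ker_comp]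
    exact Submodule.map_comap_eq_of_surjective ε.surjective _
  set e2 := ε.ofSubmodules _ _ hmap with he2def
  -- third equivalence : ker g0 ≃ (Fin b → n) × Syz S Y
  have hmemT : ∀ (x : Fin b → ↥(fiberSubring πS πT)), g0 x = 0 →
      ∀ i, (x i).1.2 ∈ maximalIdeal T := by
    intro x hx i
    rw [← hkT, RingHom.mem_ker, ← (x i).2]
    refine hfkermem (fun j => (x j).1.1) ?_ i
    rw [LinearMap.mem_ker, ← hg0x x]
    exact hx
  have hkermemS : ∀ x : ↥(LinearMap.ker g0), (fun i => (x.1 i).1.1) ∈ Syz S Y := by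
    intro x
    show (fun i => (x.1 i).1.1) ∈ LinearMap.ker (minCover S Y)
    rw [LinearMap.mem_ker, ← hg0x x.1]
    exact LinearMap.mem_ker.mp x.2
  have hinvmem : ∀ (t : Fin b → ↥(maximalIdeal T)) (s : ↥(Syz S Y)) (i : Fin b),
      πS (s.1 i) = πT (t i).1 := by
    intro t s i
    have h1 : πS (s.1 i) = 0 := hfkermem s.1 s.2 i
    have h2 : πT (t i).1 = 0 := by rw [← RingHom.mem_ker, hkT]; exact (t i).2
    rw [h1, h2]
  have hinvker : ∀ (t : Fin b → ↥(maximalIdeal T)) (s : ↥(Syz S Y)),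
      (fun i => (⟨(s.1 i, (t i).1), hinvmem t s i⟩ : ↥(fiberSubring πS πT))) ∈
        LinearMap.ker g0 := by
    intro t s
    rw [LinearMap.mem_ker, hg0x]
    exact s.2
  have e3 : ↥(LinearMap.ker g0) ≃ₗ[↥(fiberSubring πS πT)]
      ((Fin b → ↥(maximalIdeal T)) × ↥(Syz S Y)) := by
    refine ⟨⟨⟨fun x =>
        (fun i => ⟨(x.1 i).1.2, hmemT x.1 (LinearMap.mem_ker.mp x.2) i⟩,
         ⟨fun i => (x.1 i).1.1, hkermemS x⟩), ?_⟩, ?_⟩,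
      fun p => ⟨fun i => ⟨(p.2.1 i, (p.1 i).1), hinvmem p.1 p.2 i⟩, hinvker p.1 p.2⟩, ?_, ?_⟩
    · intro x y
      rfl
    · intro r x
      refine Prod.ext (funext fun i => Subtype.ext ?_) (Subtype.ext (funext fun i => ?_))
      · show r.1.2 * (x.1 i).1.2 = r • ((x.1 i).1.2 : T)
        rw [Algebra.smul_def, hAT]
        rfl
      · show r.1.1 * (x.1 i).1.1 = r • ((x.1 i).1.1 : S)
        rw [Algebra.smul_def, hAS]
        rfl
    · intro x
      rfl
    · intro p
      rfl
  exact ⟨e1.trans (e2.trans e3)⟩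
end
end

section
/- The depth of the fiber product satisfies depth R = min{depth S, depth T, 1}. -/
open CategoryTheory Limits IsLocalRing

set_option synthInstance.maxHeartbeats 1000000
set_option maxHeartbeats 1000000

noncomputable section

set_option linter.unusedSectionVars false

section Aux
variable (A : Type) [CommRing A] [IsLocalRing A]

abbrev mA := maximalIdeal A

def d1lin : (↥(maximalIdeal A) →₀ A) →ₗ[A] A := Finsupp.linearCombination A Subtype.val

lemma range_d1lin : LinearMap.range (d1lin A) = maximalIdeal A := by
  rw [d1lin, Finsupp.range_linearCombination, Subtype.range_val]
  exact Submodule.span_eq _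

def KK : Submodule A (↥(maximalIdeal A) →₀ A) := LinearMap.ker (d1lin A)

def QQ : ProjectiveResolution (ModuleCat.of A ↥(KK A)) :=
  (HasProjectiveResolution.out (Z := ModuleCat.of A ↥(KK A))).some

def resX : ℕ → ModuleCat A
  | 0 => ModuleCat.of A A
  | 1 => ModuleCat.of A (↥(maximalIdeal A) →₀ A)
  | (n+2) => (QQ A).complex.X n

def resd : ∀ n, resX A (n+1) ⟶ resX A n
  | 0 => ModuleCat.ofHom (d1lin A)
  | 1 => (QQ A).π.f 0 ≫ ModuleCat.ofHom (KK A).subtype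
  | (n+2) => (QQ A).complex.d (n+1) n

lemma ressq : ∀ n, resd A (n+1) ≫ resd A n = 0 := by
  rintro (_|_|n)
  · ext x
    exact ((QQ A).π.f 0 x).2
  · have := (QQ A).complex_d_comp_π_f_zero
    show ((QQ A).complex.d 1 0 ≫ (QQ A).π.f 0) ≫ ModuleCat.ofHom (KK A).subtype = 0
    rw [this]
    exact Limits.zero_comp
  · show (QQ A).complex.d (n+2) (n+1) ≫ (QQ A).complex.d (n+1) n = 0
    exact (QQ A).complex.d_comp_d _ _ _

def resC : ChainComplex (ModuleCat A) ℕ := ChainComplex.of (resX A) (resd A) (ressq A)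

abbrev kA := ModuleCat.of A (ResidueField A)

def resE : (resC A).X 0 ⟶ kA A := ModuleCat.ofHom (Algebra.linearMap A (ResidueField A))

lemma resE_apply (x : A) : resE A x = residue A x := rfl

lemma d_comp_resE : (resC A).d 1 0 ≫ resE A = 0 := by
  have h10 : (resC A).d 1 0 = resd A 0 := ChainComplex.of_d (resX A) (resd A) 0
  rw [h10]
  ext x
  have h1 : d1lin A x ∈ LinearMap.range (d1lin A) := ⟨x, rfl⟩
  rw [range_d1lin] at h1
  show Ideal.Quotient.mk (maximalIdeal A) (d1lin A x) = 0
  exact Ideal.Quotient.eq_zero_iff_mem.mpr h1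

def resPi : resC A ⟶ (ChainComplex.single₀ (ModuleCat A)).obj (kA A) :=
  ((resC A).toSingle₀Equiv (kA A)).symm ⟨resE A, d_comp_resE A⟩

lemma exact0 : (ShortComplex.mk ((resC A).d 1 0) (resE A) (d_comp_resE A)).Exact := by
  rw [ShortComplex.moduleCat_exact_iff]
  intro x hx
  have h10 : (resC A).d 1 0 = resd A 0 := ChainComplex.of_d (resX A) (resd A) 0
  let x' : A := x
  have hx' : x' ∈ maximalIdeal A := by
    have h0 : Ideal.Quotient.mk (maximalIdeal A) x' = 0 := hx
    exact Ideal.Quotient.eq_zero_iff_mem.mp h0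
  rw [← range_d1lin A] at hx'
  obtain ⟨y, hy⟩ := hx'
  refine ⟨y, ?_⟩
  show ((resC A).d 1 0) y = x
  rw [h10]
  exact hy

instance : Epi (resE A) := by
  rw [ModuleCat.epi_iff_surjective]
  intro y
  obtain ⟨a, ha⟩ := Ideal.Quotient.mk_surjective (I := maximalIdeal A) y
  exact ⟨a, ha⟩

lemma resC_exactAt_succ (n : ℕ) : (resC A).ExactAt (n + 1) := by
  rw [HomologicalComplex.exactAt_iff' (resC A) (n+2) (n+1) n (by simp) (by simp)]
  rw [ShortComplex.moduleCat_exact_iff]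
  have hf : (resC A).d (n+2) (n+1) = resd A (n+1) := ChainComplex.of_d _ _ (n+1)
  have hg : (resC A).d (n+1) n = resd A n := ChainComplex.of_d _ _ n
  intro x hx
  have hx2 : ((resC A).d (n+1) n) x = 0 := hx
  rw [hg] at hx2
  match n, x, hx2 with
  | 0, x, hx2 =>
    have hx' : d1lin A x = 0 := hx2
    have hsurj : Function.Surjective ((QQ A).π.f 0) :=
      (ModuleCat.epi_iff_surjective _).mp inferInstance
    obtain ⟨y, hy⟩ := hsurj ⟨x, hx'⟩
    refine ⟨y, ?_⟩
    show ((resC A).d (0+2) (0+1)) y = x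
    rw [hf]
    show ((KK A).subtype) ((QQ A).π.f 0 y) = x
    rw [hy]
    rfl
  | 1, x, hx2 =>
    have hx' : (QQ A).π.f 0 x = 0 := by
      have : ((KK A).subtype) ((QQ A).π.f 0 x) = 0 := hx2
      exact Subtype.ext this
    have hex := (QQ A).exact₀
    rw [ShortComplex.moduleCat_exact_iff] at hex
    obtain ⟨y, hy⟩ := hex x hx'
    refine ⟨y, ?_⟩
    show ((resC A).d (1+2) (1+1)) y = x
    rw [hf]
    exact hy
  | (m+2), x, hx2 =>
    have hex := (QQ A).exact_succ m
    rw [ShortComplex.moduleCat_exact_iff] at hex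
    obtain ⟨y, hy⟩ := hex x hx2
    refine ⟨y, ?_⟩
    show ((resC A).d (m+2+2) (m+2+1)) y = x
    rw [hf]
    exact hy

instance resPi_quasiIso : QuasiIso (resPi A) := by
  constructor
  intro i
  match i with
  | 0 =>
    rw [quasiIsoAt_iff_isIso_homologyMap]
    have hnat := ChainComplex.isoHomologyι₀_inv_naturality (φ := resPi A)
    have : HomologicalComplex.homologyMap (resPi A) 0 =
        (resC A).isoHomologyι₀.hom ≫ HomologicalComplex.opcyclesMap (resPi A) 0 ≫
          ((ChainComplex.single₀ (ModuleCat A)).obj (kA A)).isoHomologyι₀.inv := by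
      rw [← hnat, Iso.hom_inv_id_assoc]
    rw [this]
    have hcoker : IsColimit (CokernelCofork.ofπ (resE A) (d_comp_resE A)) :=
      (exact0 A).gIsCokernel
    have hC : IsColimit (CokernelCofork.ofπ ((resC A).pOpcycles 0)
        ((resC A).d_pOpcycles 1 0)) := (resC A).opcyclesIsCokernel 1 0 (by simp)
    have hiso : IsIso (HomologicalComplex.opcyclesMap (resPi A) 0) := by
      have heq : HomologicalComplex.opcyclesMap (resPi A) 0 =
          (IsColimit.coconePointUniqueUpToIso hC hcoker).hom ≫
            ((ChainComplex.single₀ (ModuleCat A)).obj (kA A)).pOpcycles 0 := by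
        rw [← cancel_epi ((resC A).pOpcycles 0)]
        rw [HomologicalComplex.p_opcyclesMap]
        have h1 : (resPi A).f 0 = resE A :=
          ChainComplex.toSingle₀Equiv_symm_apply_f_zero _ _
        rw [h1]
        have h2 : (resC A).pOpcycles 0 ≫ (IsColimit.coconePointUniqueUpToIso hC hcoker).hom
            = resE A := IsColimit.comp_coconePointUniqueUpToIso_hom hC hcoker
              (WalkingParallelPair.one)
        exact ((Category.assoc _ _ _).symm.trans (congrArg (· ≫ _) h2)).symm
      rw [heq]
      have : IsIso (((ChainComplex.single₀ (ModuleCat A)).obj (kA A)).pOpcycles 0) :=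
        HomologicalComplex.isIso_pOpcycles _ 1 0 (by simp) (by simp; rfl)
      exact IsIso.comp_isIso' inferInstance this
    infer_instance
  | (n+1) =>
    rw [quasiIsoAt_iff_exactAt' (resPi A) (n+1)
      (ChainComplex.exactAt_succ_single_obj _ _)]
    exact resC_exactAt_succ A n

instance resC_projective (n : ℕ) : CategoryTheory.Projective ((resC A).X n) := by
  match n with
  | 0 => exact (IsProjective.iff_projective _).mp inferInstance
  | 1 => exact (IsProjective.iff_projective _).mp inferInstance
  | (m+2) => exact (QQ A).projective m

def res : ProjectiveResolution (kA A) where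
  complex := resC A
  π := resPi A



variable {A}

lemma isZero_ext_iff (n : ℕ) (M : ModuleCat A) :
    IsZero (((Ext A (ModuleCat A) n).obj (Opposite.op (kA A))).obj M) ↔
    (((res A).complex).linearYonedaObj A M).ExactAt n := by
  rw [HomologicalComplex.exactAt_iff_isZero_homology]
  constructor
  · intro h
    exact h.of_iso ((res A).isoExt n M).symm
  · intro h
    exact h.of_iso ((res A).isoExt n M)

lemma exactAt0_iff (M : ModuleCat A) :
    (((res A).complex).linearYonedaObj A M).ExactAt 0 ↔
      ∀ φ : (resC A).X 0 ⟶ M, (resC A).d 1 0 ≫ φ = 0 → φ = 0 := by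
  rw [HomologicalComplex.exactAt_iff' _ 0 0 1 (by simp) (by simp)]
  rw [ShortComplex.moduleCat_exact_iff]
  constructor
  · intro h φ hφ
    have h2 := h φ (by
      show (((res A).complex).linearYonedaObj A M).d 0 1 φ = 0
      rw [ChainComplex.linearYonedaObj_d]
      exact hφ)
    obtain ⟨χ, hχ⟩ := h2
    have h00 : (((res A).complex).linearYonedaObj A M).d 0 0 = 0 :=
      HomologicalComplex.shape _ 0 0 (by simp)
    have h3 : (((res A).complex).linearYonedaObj A M).d 0 0 χ = φ := hχ
    rw [h00] at h3
    exact h3.symm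
  · intro h φ hφ
    have hφ' : (resC A).d 1 0 ≫ φ = 0 := by
      have h3 : (((res A).complex).linearYonedaObj A M).d 0 1 φ = 0 := hφ
      rw [ChainComplex.linearYonedaObj_d] at h3
      exact h3
    refine ⟨0, ?_⟩
    show (((res A).complex).linearYonedaObj A M).d 0 0 0 = φ
    rw [map_zero, h φ hφ']
    rfl

lemma exactAt1_iff (M : ModuleCat A) :
    (((res A).complex).linearYonedaObj A M).ExactAt 1 ↔
      ∀ φ : (resC A).X 1 ⟶ M, (resC A).d 2 1 ≫ φ = 0 →
        ∃ χ : (resC A).X 0 ⟶ M, (resC A).d 1 0 ≫ χ = φ := by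
  rw [HomologicalComplex.exactAt_iff' _ 0 1 2 (by simp) (by simp)]
  rw [ShortComplex.moduleCat_exact_iff]
  constructor
  · intro h φ hφ
    have h2 := h φ (by
      show (((res A).complex).linearYonedaObj A M).d 1 2 φ = 0
      rw [ChainComplex.linearYonedaObj_d]
      exact hφ)
    obtain ⟨χ, hχ⟩ := h2
    refine ⟨χ, ?_⟩
    have h3 : (((res A).complex).linearYonedaObj A M).d 0 1 χ = φ := hχ
    rw [ChainComplex.linearYonedaObj_d] at h3
    exact h3
  · intro h φ hφ
    have hφ' : (resC A).d 2 1 ≫ φ = 0 := by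
      have h3 : (((res A).complex).linearYonedaObj A M).d 1 2 φ = 0 := hφ
      rw [ChainComplex.linearYonedaObj_d] at h3
      exact h3
    obtain ⟨χ, hχ⟩ := h φ hφ'
    refine ⟨χ, ?_⟩
    show (((res A).complex).linearYonedaObj A M).d 0 1 χ = φ
    rw [ChainComplex.linearYonedaObj_d]
    exact hχ

lemma d10_eq : (resC A).d 1 0 = ModuleCat.ofHom (d1lin A) := ChainComplex.of_d (resX A) (resd A) 0

lemma d1lin_mem (z : ↥(maximalIdeal A) →₀ A) : d1lin A z ∈ maximalIdeal A := by
  have h : d1lin A z ∈ LinearMap.range (d1lin A) := ⟨z, rfl⟩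
  rwa [range_d1lin A] at h

lemma ext0_not_isZero_iff (M : Type) [AddCommGroup M] [Module A M] :
    ¬ IsZero (((Ext A (ModuleCat A) 0).obj (Opposite.op (kA A))).obj (ModuleCat.of A M)) ↔
    ∃ y : M, y ≠ 0 ∧ ∀ a ∈ maximalIdeal A, a • y = 0 := by
  rw [isZero_ext_iff, exactAt0_iff]
  constructor
  · intro h
    push_neg at h
    obtain ⟨φ, hd, hne⟩ := h
    let ψ : A →ₗ[A] M := φ.hom
    have key : ∀ a : A, ψ a = a • ψ 1 := fun a => by
      rw [← map_smul, smul_eq_mul, mul_one]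
    have hd' : ModuleCat.ofHom (d1lin A) ≫ φ = 0 := by rw [← d10_eq]; exact hd
    have hm : ∀ a ∈ maximalIdeal A, ψ a = 0 := by
      intro a ha
      rw [← range_d1lin A] at ha
      obtain ⟨z, hz⟩ := ha
      have happ : ψ (d1lin A z) = 0 := LinearMap.congr_fun (congrArg ModuleCat.Hom.hom hd') z
      rw [← hz]
      exact happ
    refine ⟨ψ 1, ?_, ?_⟩
    · intro h1
      apply hne
      refine ModuleCat.hom_ext (LinearMap.ext ?_)
      intro (a : A)
      show ψ a = 0
      rw [key a, h1, smul_zero]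
    · intro a ha
      rw [← key a]
      exact hm a ha
  · intro ⟨y, hy0, hym⟩ h
    have h2 := h (ModuleCat.ofHom (LinearMap.toSpanSingleton A M y)) (by
      rw [d10_eq]
      refine ModuleCat.hom_ext (LinearMap.ext ?_)
      intro z
      show (d1lin A z) • y = 0
      exact hym _ (d1lin_mem z))
    apply hy0
    have h1 : LinearMap.toSpanSingleton A M y 1 = 0 := LinearMap.congr_fun (congrArg ModuleCat.Hom.hom h2) (1:A)
    rw [← one_smul A y]
    exact h1

def codRes : (↥(maximalIdeal A) →₀ A) →ₗ[A] ↥(maximalIdeal A) :=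
  (d1lin A).codRestrict (maximalIdeal A) d1lin_mem

lemma ext1_not_isZero (M : Type) [AddCommGroup M] [Module A M]
    (ψ : ↥(maximalIdeal A) →ₗ[A] M)
    (hψ : ¬ ∃ y : M, ∀ x : ↥(maximalIdeal A), ψ x = (x : A) • y) :
    ¬ IsZero (((Ext A (ModuleCat A) 1).obj (Opposite.op (kA A))).obj (ModuleCat.of A M)) := by
  rw [isZero_ext_iff, exactAt1_iff]
  intro h
  have d21 : (resC A).d 2 1 = (QQ A).π.f 0 ≫ ModuleCat.ofHom (KK A).subtype :=
    ChainComplex.of_d (resX A) (resd A) 1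
  have hd : (resC A).d 2 1 ≫ ModuleCat.ofHom (ψ ∘ₗ codRes) = 0 := by
    rw [d21]
    refine ModuleCat.hom_ext (LinearMap.ext ?_)
    intro z
    show ψ (codRes ((KK A).subtype ((QQ A).π.f 0 z))) = 0
    have hker : d1lin A ((KK A).subtype ((QQ A).π.f 0 z)) = 0 := ((QQ A).π.f 0 z).2
    have hz : codRes ((KK A).subtype ((QQ A).π.f 0 z)) = 0 := Subtype.ext hker
    rw [hz, map_zero]
  obtain ⟨χ, hχ⟩ := h (ModuleCat.ofHom (ψ ∘ₗ codRes)) hd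
  apply hψ
  let χ' : A →ₗ[A] M := χ.hom
  refine ⟨χ' 1, ?_⟩
  intro x
  have hχ' : ModuleCat.ofHom (d1lin A) ≫ χ = ModuleCat.ofHom (ψ ∘ₗ codRes) := by
    rw [← d10_eq]; exact hχ
  have happ : χ' (d1lin A (Finsupp.single x 1)) = ψ (codRes (Finsupp.single x 1)) :=
    LinearMap.congr_fun (congrArg ModuleCat.Hom.hom hχ') (Finsupp.single x 1)
  have hsingle : d1lin A (Finsupp.single x (1:A)) = (x : A) := by
    rw [d1lin, Finsupp.linearCombination_single, one_smul]
  have lhs : χ' (d1lin A (Finsupp.single x (1:A))) = (x : A) • χ' 1 := by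
    rw [hsingle, ← map_smul, smul_eq_mul, mul_one]
  have rhs : ψ (codRes (Finsupp.single x (1:A))) = ψ x := by
    congr 1
    exact Subtype.ext hsingle
  rw [← rhs, ← happ, lhs]

lemma moduleDepth_eq_zero_iff (M : Type) [AddCommGroup M] [Module A M] :
    moduleDepth A M = 0 ↔
    ¬ IsZero (((Ext A (ModuleCat A) 0).obj (Opposite.op (kA A))).obj (ModuleCat.of A M)) := by
  set S : Set ℕ∞ := {n : ℕ∞ | ∃ i : ℕ, n = i ∧ ¬ Limits.IsZero
    (((Ext A (ModuleCat A) i).obj (Opposite.op (ModuleCat.of A (ResidueField A)))).obj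
      (ModuleCat.of A M))} with hS
  have hmem : (0 : ℕ∞) ∈ S ↔
      ¬ IsZero (((Ext A (ModuleCat A) 0).obj (Opposite.op (kA A))).obj (ModuleCat.of A M)) := by
    constructor
    · rintro ⟨i, hi, h⟩
      have : i = 0 := by exact_mod_cast hi.symm
      rw [this] at h
      exact h
    · intro h
      exact ⟨0, by norm_num, h⟩
  have hdef : moduleDepth A M = sInf S := rfl
  constructor
  · intro h
    rcases Set.eq_empty_or_nonempty S with he | hne
    · rw [hdef, he, sInf_empty] at h
      exact absurd h (by simp)
    · have hm := csInf_mem hne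
      rw [← hdef, h] at hm
      exact hmem.mp hm
  · intro h
    refine le_antisymm ?_ (by simp)
    rw [hdef]
    exact sInf_le (hmem.mpr h)

lemma one_le_moduleDepth (M : Type) [AddCommGroup M] [Module A M]
    (h : IsZero (((Ext A (ModuleCat A) 0).obj (Opposite.op (kA A))).obj (ModuleCat.of A M))) :
    1 ≤ moduleDepth A M := by
  show 1 ≤ sInf _
  apply le_sInf
  rintro b ⟨i, hb, hi⟩
  rcases Nat.eq_zero_or_pos i with h0 | h1
  · rw [h0] at hi
    exact absurd h hi
  · rw [hb]
    exact_mod_cast h1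

lemma moduleDepth_eq_one (M : Type) [AddCommGroup M] [Module A M]
    (h0 : IsZero (((Ext A (ModuleCat A) 0).obj (Opposite.op (kA A))).obj (ModuleCat.of A M)))
    (h1 : ¬ IsZero (((Ext A (ModuleCat A) 1).obj (Opposite.op (kA A))).obj (ModuleCat.of A M))) :
    moduleDepth A M = 1 := by
  refine le_antisymm ?_ (one_le_moduleDepth M h0)
  show sInf _ ≤ 1
  apply sInf_le
  exact ⟨1, by norm_num, h1⟩

section FP
variable {S T k : Type} [CommRing S] [CommRing T] [Field k]

variable [IsLocalRing S] [IsLocalRing T]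
variable (πS : S →+* k) (πT : T →+* k)

lemma fst_mem_max_iff_snd {x : ↥(fiberSubring πS πT)}
    (hkS : RingHom.ker πS = maximalIdeal S) (hkT : RingHom.ker πT = maximalIdeal T) :
    (x : S × T).1 ∈ maximalIdeal S ↔ (x : S × T).2 ∈ maximalIdeal T := by
  have hc : πS (x : S × T).1 = πT (x : S × T).2 := x.2
  rw [← hkS, ← hkT, RingHom.mem_ker, RingHom.mem_ker, hc]

lemma isUnit_iff_fst (hkS : RingHom.ker πS = maximalIdeal S)
    (hkT : RingHom.ker πT = maximalIdeal T) (x : ↥(fiberSubring πS πT)) :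
    IsUnit x ↔ (x : S × T).1 ∉ maximalIdeal S := by
  constructor
  · intro hu hmem
    obtain ⟨xu, hxu⟩ := hu
    have h1 : x * ((xu⁻¹ : _) : ↥(fiberSubring πS πT)) = 1 := by
      rw [← hxu]; exact_mod_cast xu.mul_inv
    have h2 : (x : S × T).1 * ((((xu⁻¹ : _) : ↥(fiberSubring πS πT))) : S × T).1 = 1 :=
      congrArg (fun r : ↥(fiberSubring πS πT) => ((r : S × T)).1) h1
    exact (mem_nonunits_iff.mp ((IsLocalRing.mem_maximalIdeal _).mp hmem))
      (IsUnit.of_mul_eq_one _ h2)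
  · intro hmem
    have hu1 : IsUnit (x : S × T).1 := by
      by_contra hc
      exact hmem ((IsLocalRing.mem_maximalIdeal _).mpr (mem_nonunits_iff.mpr hc))
    have hu2 : IsUnit (x : S × T).2 := by
      by_contra hc
      exact hmem ((fst_mem_max_iff_snd πS πT hkS hkT).mpr
        ((IsLocalRing.mem_maximalIdeal _).mpr (mem_nonunits_iff.mpr hc)))
    obtain ⟨u, hu⟩ := hu1
    obtain ⟨v, hv⟩ := hu2
    have hcompat : πS ((u⁻¹ : Sˣ) : S) = πT ((v⁻¹ : Tˣ) : T) := by
      have hc : πS (x : S × T).1 = πT (x : S × T).2 := x.2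
      have hvu : πS ((u : S)) = πT ((v : T)) := by rw [hu, hv]; exact hc
      have h1 : πS ((u : S)) * πS ((u⁻¹ : Sˣ) : S) = 1 := by
        rw [← map_mul, u.mul_inv, map_one]
      have h2 : πT ((v : T)) * πT ((v⁻¹ : Tˣ) : T) = 1 := by
        rw [← map_mul, v.mul_inv, map_one]
      have e1 : (πS ((u : S)))⁻¹ = πS ((u⁻¹ : Sˣ) : S) := inv_eq_of_mul_eq_one_right h1
      have e2 : (πT ((v : T)))⁻¹ = πT ((v⁻¹ : Tˣ) : T) := inv_eq_of_mul_eq_one_right h2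
      rw [← e1, ← e2, hvu]
    refine IsUnit.of_mul_eq_one (a := x) ⟨(((u⁻¹ : Sˣ) : S), ((v⁻¹ : Tˣ) : T)), hcompat⟩ ?_
    apply Subtype.ext
    show ((x : S × T)) * _ = 1
    apply Prod.ext
    · show (x : S × T).1 * ((u⁻¹ : Sˣ) : S) = 1
      rw [← hu]
      exact u.mul_inv
    · show (x : S × T).2 * ((v⁻¹ : Tˣ) : T) = 1
      rw [← hv]
      exact v.mul_inv

variable [IsLocalRing ↥(fiberSubring πS πT)]

lemma mem_maxR_iff (hkS : RingHom.ker πS = maximalIdeal S)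
    (hkT : RingHom.ker πT = maximalIdeal T) (x : ↥(fiberSubring πS πT)) :
    x ∈ maximalIdeal ↥(fiberSubring πS πT) ↔ (x : S × T).1 ∈ maximalIdeal S := by
  rw [IsLocalRing.mem_maximalIdeal, mem_nonunits_iff, isUnit_iff_fst πS πT hkS hkT]
  tauto

lemma mem_maxR_iff' (hkS : RingHom.ker πS = maximalIdeal S)
    (hkT : RingHom.ker πT = maximalIdeal T) (x : ↥(fiberSubring πS πT)) :
    x ∈ maximalIdeal ↥(fiberSubring πS πT) ↔ (x : S × T).2 ∈ maximalIdeal T := by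
  rw [mem_maxR_iff πS πT hkS hkT, fst_mem_max_iff_snd πS πT hkS hkT]

lemma mkS_mem (s : S) (hs : πS s = 0) : ((s, 0) : S × T) ∈ fiberSubring πS πT := by
  show πS s = πT 0
  rw [hs, map_zero]

lemma mkT_mem (t : T) (ht : πT t = 0) : ((0, t) : S × T) ∈ fiberSubring πS πT := by
  show πS 0 = πT t
  rw [ht, map_zero]

theorem main (hπS : Function.Surjective πS) (hπT : Function.Surjective πT)
    (hkS : RingHom.ker πS = maximalIdeal S) (hkT : RingHom.ker πT = maximalIdeal T)
    (hSk : maximalIdeal S ≠ ⊥) (hTk : maximalIdeal T ≠ ⊥) :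
    moduleDepth ↥(fiberSubring πS πT) ↥(fiberSubring πS πT) =
      min (min (moduleDepth S S) (moduleDepth T T)) 1 := by
  have hπS0 : ∀ a ∈ maximalIdeal S, πS a = 0 := by
    intro a ha
    rw [← hkS] at ha
    exact ha
  have hπT0 : ∀ b ∈ maximalIdeal T, πT b = 0 := by
    intro b hb
    rw [← hkT] at hb
    exact hb
  -- socle element of S gives socle element of R
  have socS : (∃ y : S, y ≠ 0 ∧ ∀ a ∈ maximalIdeal S, a • y = 0) →
      moduleDepth ↥(fiberSubring πS πT) ↥(fiberSubring πS πT) = 0 := by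
    rintro ⟨y, hy0, hym⟩
    have hymem : y ∈ maximalIdeal S := by
      by_contra hy
      have hu : IsUnit y := by
        by_contra hc
        exact hy ((IsLocalRing.mem_maximalIdeal _).mpr (mem_nonunits_iff.mpr hc))
      obtain ⟨u, hu⟩ := hu
      apply hSk
      rw [Submodule.eq_bot_iff]
      intro a ha
      have h1 : a * y = 0 := by rw [← smul_eq_mul]; exact hym a ha
      have h2 : a * (y * ((u⁻¹ : Sˣ) : S)) = a := by
        have : y * ((u⁻¹ : Sˣ) : S) = 1 := by rw [← hu]; exact u.mul_inv
        rw [this, mul_one]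
      rw [← h2, ← mul_assoc, h1, zero_mul]
    have hpy : πS y = 0 := hπS0 y hymem
    rw [moduleDepth_eq_zero_iff, ext0_not_isZero_iff]
    refine ⟨⟨(y, 0), mkS_mem πS πT y hpy⟩, ?_, ?_⟩
    · intro h
      apply hy0
      have := congrArg (fun r : ↥(fiberSubring πS πT) => ((r : S × T)).1) h
      exact this
    · intro a ha
      rw [mem_maxR_iff πS πT hkS hkT] at ha
      apply Subtype.ext
      apply Prod.ext
      · show (a : S × T).1 * y = 0
        rw [← smul_eq_mul]
        exact hym _ ha
      · show (a : S × T).2 * 0 = 0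
        rw [mul_zero]
  have socT : (∃ y : T, y ≠ 0 ∧ ∀ b ∈ maximalIdeal T, b • y = 0) →
      moduleDepth ↥(fiberSubring πS πT) ↥(fiberSubring πS πT) = 0 := by
    rintro ⟨y, hy0, hym⟩
    have hymem : y ∈ maximalIdeal T := by
      by_contra hy
      have hu : IsUnit y := by
        by_contra hc
        exact hy ((IsLocalRing.mem_maximalIdeal _).mpr (mem_nonunits_iff.mpr hc))
      obtain ⟨u, hu⟩ := hu
      apply hTk
      rw [Submodule.eq_bot_iff]
      intro b hb
      have h1 : b * y = 0 := by rw [← smul_eq_mul]; exact hym b hb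
      have h2 : b * (y * ((u⁻¹ : Tˣ) : T)) = b := by
        have : y * ((u⁻¹ : Tˣ) : T) = 1 := by rw [← hu]; exact u.mul_inv
        rw [this, mul_one]
      rw [← h2, ← mul_assoc, h1, zero_mul]
    have hpy : πT y = 0 := hπT0 y hymem
    rw [moduleDepth_eq_zero_iff, ext0_not_isZero_iff]
    refine ⟨⟨(0, y), mkT_mem πS πT y hpy⟩, ?_, ?_⟩
    · intro h
      apply hy0
      have := congrArg (fun r : ↥(fiberSubring πS πT) => ((r : S × T)).2) h
      exact this
    · intro a ha
      rw [mem_maxR_iff' πS πT hkS hkT] at ha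
      apply Subtype.ext
      apply Prod.ext
      · show (a : S × T).1 * 0 = 0
        rw [mul_zero]
      · show (a : S × T).2 * y = 0
        rw [← smul_eq_mul]
        exact hym _ ha
  by_cases hs : ∃ y : S, y ≠ 0 ∧ ∀ a ∈ maximalIdeal S, a • y = 0
  · have hdS : moduleDepth S S = 0 := by
      rw [moduleDepth_eq_zero_iff, ext0_not_isZero_iff]
      exact hs
    rw [socS hs, hdS]
    simp
  by_cases ht : ∃ y : T, y ≠ 0 ∧ ∀ b ∈ maximalIdeal T, b • y = 0
  · have hdT : moduleDepth T T = 0 := by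
      rw [moduleDepth_eq_zero_iff, ext0_not_isZero_iff]
      exact ht
    rw [socT ht, hdT]
    simp
  -- both socles vanish
  have h0S : IsZero (((Ext S (ModuleCat S) 0).obj (Opposite.op (kA S))).obj (ModuleCat.of S S)) := by
    by_contra hni
    exact hs ((ext0_not_isZero_iff S).mp hni)
  have h0T : IsZero (((Ext T (ModuleCat T) 0).obj (Opposite.op (kA T))).obj (ModuleCat.of T T)) := by
    by_contra hni
    exact ht ((ext0_not_isZero_iff T).mp hni)
  have hdS : 1 ≤ moduleDepth S S := one_le_moduleDepth S h0S
  have hdT : 1 ≤ moduleDepth T T := one_le_moduleDepth T h0T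
  have hRHS : min (min (moduleDepth S S) (moduleDepth T T)) 1 = 1 := by
    rw [min_eq_right (le_min hdS hdT)]
  rw [hRHS]
  -- now show depth of R is 1
  have h0R : IsZero (((Ext ↥(fiberSubring πS πT) (ModuleCat ↥(fiberSubring πS πT)) 0).obj
      (Opposite.op (kA ↥(fiberSubring πS πT)))).obj
      (ModuleCat.of ↥(fiberSubring πS πT) ↥(fiberSubring πS πT))) := by
    by_contra hni
    obtain ⟨x, hx0, hxm⟩ := (ext0_not_isZero_iff ↥(fiberSubring πS πT)).mp hni
    have h1 : (x : S × T).1 = 0 := by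
      by_contra hne
      apply hs
      refine ⟨(x : S × T).1, hne, ?_⟩
      intro a ha
      have hz : ((a, 0) : S × T) ∈ fiberSubring πS πT := mkS_mem πS πT a (hπS0 a ha)
      have hzm : (⟨(a, 0), hz⟩ : ↥(fiberSubring πS πT)) ∈
          maximalIdeal ↥(fiberSubring πS πT) := by
        rw [mem_maxR_iff πS πT hkS hkT]
        exact ha
      have := hxm _ hzm
      have h2 := congrArg (fun r : ↥(fiberSubring πS πT) => ((r : S × T)).1) this
      rw [smul_eq_mul]
      exact h2
    have h2 : (x : S × T).2 = 0 := by
      by_contra hne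
      apply ht
      refine ⟨(x : S × T).2, hne, ?_⟩
      intro b hb
      have hz : ((0, b) : S × T) ∈ fiberSubring πS πT := mkT_mem πS πT b (hπT0 b hb)
      have hzm : (⟨(0, b), hz⟩ : ↥(fiberSubring πS πT)) ∈
          maximalIdeal ↥(fiberSubring πS πT) := by
        rw [mem_maxR_iff' πS πT hkS hkT]
        exact hb
      have := hxm _ hzm
      have h2 := congrArg (fun r : ↥(fiberSubring πS πT) => ((r : S × T)).2) this
      rw [smul_eq_mul]
      exact h2
    apply hx0
    apply Subtype.ext
    apply Prod.ext
    · exact h1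
    · exact h2
  -- the linear map ψ on the maximal ideal
  have memS_of_mem : ∀ z : ↥(fiberSubring πS πT), z ∈ maximalIdeal ↥(fiberSubring πS πT) →
      πS ((z : S × T)).1 = 0 := by
    intro z hz
    rw [mem_maxR_iff πS πT hkS hkT] at hz
    exact hπS0 _ hz
  let ψ : ↥(maximalIdeal ↥(fiberSubring πS πT)) →ₗ[↥(fiberSubring πS πT)]
      ↥(fiberSubring πS πT) := {
    toFun := fun z => ⟨(((z : ↥(fiberSubring πS πT)) : S × T).1, 0),
      mkS_mem πS πT _ (memS_of_mem z z.2)⟩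
    map_add' := fun z w => by
      apply Subtype.ext
      apply Prod.ext
      · rfl
      · show (0 : T) = 0 + 0
        rw [add_zero]
    map_smul' := fun r z => by
      apply Subtype.ext
      apply Prod.ext
      · rfl
      · show (0 : T) = (r : S × T).2 * 0
        rw [mul_zero] }
  have h1R : ¬ IsZero (((Ext ↥(fiberSubring πS πT) (ModuleCat ↥(fiberSubring πS πT)) 1).obj
      (Opposite.op (kA ↥(fiberSubring πS πT)))).obj
      (ModuleCat.of ↥(fiberSubring πS πT) ↥(fiberSubring πS πT))) := by
    apply ext1_not_isZero _ ψ
    rintro ⟨y, hy⟩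
    have hu : ∀ a ∈ maximalIdeal S, a * (y : S × T).1 = a := by
      intro a ha
      have hz : ((a, 0) : S × T) ∈ fiberSubring πS πT := mkS_mem πS πT a (hπS0 a ha)
      have hzm : (⟨(a, 0), hz⟩ : ↥(fiberSubring πS πT)) ∈
          maximalIdeal ↥(fiberSubring πS πT) := by
        rw [mem_maxR_iff πS πT hkS hkT]
        exact ha
      have := hy ⟨⟨(a, 0), hz⟩, hzm⟩
      have h2 := congrArg (fun r : ↥(fiberSubring πS πT) => ((r : S × T)).1) this
      exact h2.symm
    have hv : ∀ b ∈ maximalIdeal T, b * (y : S × T).2 = 0 := by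
      intro b hb
      have hz : ((0, b) : S × T) ∈ fiberSubring πS πT := mkT_mem πS πT b (hπT0 b hb)
      have hzm : (⟨(0, b), hz⟩ : ↥(fiberSubring πS πT)) ∈
          maximalIdeal ↥(fiberSubring πS πT) := by
        rw [mem_maxR_iff' πS πT hkS hkT]
        exact hb
      have := hy ⟨⟨(0, b), hz⟩, hzm⟩
      have h2 := congrArg (fun r : ↥(fiberSubring πS πT) => ((r : S × T)).2) this
      exact h2.symm
    have hy1 : (y : S × T).1 = 1 := by
      by_contra hne
      apply hs
      refine ⟨1 - (y : S × T).1, fun hc => hne (by rwa [sub_eq_zero, eq_comm] at hc), ?_⟩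
      intro a ha
      rw [smul_eq_mul, mul_sub, mul_one, hu a ha, sub_self]
    have hy2 : (y : S × T).2 = 0 := by
      by_contra hne
      apply ht
      refine ⟨(y : S × T).2, hne, ?_⟩
      intro b hb
      rw [smul_eq_mul]
      exact hv b hb
    have hcompat : πS ((y : S × T)).1 = πT ((y : S × T)).2 := y.2
    rw [hy1, hy2, map_one, map_zero] at hcompat
    exact one_ne_zero hcompat
  rw [moduleDepth_eq_one _ h0R h1R]

end FP
end Aux

theorem stmt16 {S T k : Type} [CommRing S] [CommRing T] [Field k]
    [IsLocalRing S] [IsLocalRing T] [IsNoetherianRing S] [IsNoetherianRing T]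
    (πS : S →+* k) (πT : T →+* k)
    (hπS : Function.Surjective πS) (hπT : Function.Surjective πT)
    (hkS : RingHom.ker πS = maximalIdeal S) (hkT : RingHom.ker πT = maximalIdeal T)
    (hSk : maximalIdeal S ≠ ⊥) (hTk : maximalIdeal T ≠ ⊥) [IsLocalRing ↥(fiberSubring πS πT)] :
    moduleDepth ↥(fiberSubring πS πT) ↥(fiberSubring πS πT) = min (min (moduleDepth S S) (moduleDepth T T)) 1 := by
  exact main πS πT hπS hπT hkS hkT hSk hTk
end
end
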